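/- Let A(x) = Γ(x) if x is not an integer, A(x) = Γ(x + 1/2) if x is an integer, and B(x) = sin(π·x); for each real a let v_a be the L₁-iterated sequence of (A, B) with initial value a. Then the family contains unbounded sequences: there exists a real a such that the sequence v_a is unbounded, i.e. for every M > 0 there is an index n with |v_a(n)| > M. -/

import Mathlib

open scoped Classical

/-- The Thue–Morse sequence: `thueMorse n` is `true` iff the number of `1`s in
the binary expansion of `n` is odd. -/
def thueMorse (n : ℕ) : Bool := decide (Odd ((Nat.digits 2 n).count 1))

/-- The L₁-iterated sequence of a pair of maps `(A, B)` with initial value `a`. -/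
def L1Seq (A B : ℝ → ℝ) (a : ℝ) : ℕ → ℝ
  | 0 => a
  | n + 1 => if thueMorse n then B (L1Seq A B a n) else A (L1Seq A B a n)

/-- `A x = Γ x` if `x` is not an integer, and `A x = Γ (x + 1/2)` if `x` is an
integer. -/
noncomputable def Amap : ℝ → ℝ := fun x =>
  if ∃ m : ℤ, x = (m : ℝ) then Real.Gamma (x + 1 / 2) else Real.Gamma x

/-- `B x = sin (π x)`. -/
noncomputable def Bmap : ℝ → ℝ := fun x => Real.sin (Real.pi * x)



lemma count1_two_pow (k : ℕ) : ((Nat.digits 2 (2^k)).count 1) = 1 := by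
  induction k with
  | zero => norm_num
  | succ k ih =>
    rw [Nat.digits_def' (by norm_num : 1 < 2) (by positivity)]
    have h1 : 2 ^ (k+1) % 2 = 0 := by rw [pow_succ]; omega
    have h2 : 2 ^ (k+1) / 2 = 2 ^ k := by rw [pow_succ]; omega
    rw [h1, h2, List.count_cons, ih]
    norm_num

lemma count1_two_pow_add_one (k : ℕ) (hk : 1 ≤ k) :
    ((Nat.digits 2 (2^k + 1)).count 1) = 2 := by
  obtain ⟨j, rfl⟩ : ∃ j, k = j + 1 := ⟨k - 1, by omega⟩
  rw [Nat.digits_def' (by norm_num : 1 < 2) (by positivity)]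
  have h1 : (2 ^ (j+1) + 1) % 2 = 1 := by rw [pow_succ]; omega
  have h2 : (2 ^ (j+1) + 1) / 2 = 2 ^ j := by rw [pow_succ]; omega
  rw [h1, h2, List.count_cons, count1_two_pow]
  norm_num

lemma tm_pow (k : ℕ) : thueMorse (2^k) = true := by
  show decide (Odd ((Nat.digits 2 (2^k)).count 1)) = true
  rw [count1_two_pow]; decide

lemma tm_pow_add_one (k : ℕ) (hk : 1 ≤ k) : thueMorse (2^k + 1) = false := by
  show decide (Odd ((Nat.digits 2 (2^k + 1)).count 1)) = false
  rw [count1_two_pow_add_one k hk]; decide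

lemma Gamma_two' : Real.Gamma 2 = 1 := by
  rw [show (2:ℝ) = (1:ℕ) + 1 by norm_num, Real.Gamma_nat_eq_factorial]; norm_num

lemma Gamma_three' : Real.Gamma 3 = 2 := by
  rw [show (3:ℝ) = (2:ℕ) + 1 by norm_num, Real.Gamma_nat_eq_factorial]; norm_num

lemma Gamma_four' : Real.Gamma 4 = 6 := by
  rw [show (4:ℝ) = (3:ℕ) + 1 by norm_num, Real.Gamma_nat_eq_factorial]
  norm_num [Nat.factorial]

lemma Gamma_five' : Real.Gamma 5 = 24 := by
  rw [show (5:ℝ) = (4:ℕ) + 1 by norm_num, Real.Gamma_nat_eq_factorial]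
  norm_num [Nat.factorial]

/-- Γ x ≥ 1 for x ≥ 2. -/
lemma Gamma_ge_one {x : ℝ} (hx : 2 ≤ x) : 1 ≤ Real.Gamma x := by
  rcases eq_or_lt_of_le hx with h | h
  · rw [← h, Gamma_two']
  · have hs := Real.convexOn_Gamma.slope_mono_adjacent
      (by norm_num : (1:ℝ) ∈ Set.Ioi 0) (Set.mem_Ioi.mpr (by linarith) : x ∈ Set.Ioi (0:ℝ))
      (by norm_num : (1:ℝ) < 2) h
    rw [Real.Gamma_one, Gamma_two'] at hs
    have hx2 : 0 < x - 2 := by linarith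
    have h0 : (0:ℝ) ≤ (Real.Gamma x - 1) / (x - 2) := by
      have : ((1:ℝ) - 1) / (2 - 1) = 0 := by norm_num
      linarith [hs]
    nlinarith [mul_nonneg h0 hx2.le, div_mul_cancel₀ (Real.Gamma x - 1) hx2.ne']

/-- Γ x ≤ x - 1 for 2 ≤ x ≤ 3. -/
lemma Gamma_le_on_23 {x : ℝ} (h1 : 2 ≤ x) (h2 : x ≤ 3) : Real.Gamma x ≤ x - 1 := by
  have hc := Real.convexOn_Gamma.2 (by norm_num : (2:ℝ) ∈ Set.Ioi 0)
    (by norm_num : (3:ℝ) ∈ Set.Ioi 0) (by linarith : (0:ℝ) ≤ 3 - x)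
    (by linarith : (0:ℝ) ≤ x - 2) (by ring)
  have hx : (3 - x) • (2:ℝ) + (x - 2) • (3:ℝ) = x := by
    simp only [smul_eq_mul]; ring
  rw [hx] at hc
  simp only [smul_eq_mul, Gamma_two', Gamma_three'] at hc
  linarith

/-- slope lower bound: Γ y - Γ x ≥ 18 (y - x) for 5 ≤ x < y. -/
lemma Gamma_slope {x y : ℝ} (hx : 5 ≤ x) (hxy : x < y) :
    18 * (y - x) ≤ Real.Gamma y - Real.Gamma x := by
  have h45 : ∀ z : ℝ, 5 < z → (18:ℝ) ≤ (Real.Gamma z - 24) / (z - 5) := by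
    intro z hz
    have hs := Real.convexOn_Gamma.slope_mono_adjacent
      (by norm_num : (4:ℝ) ∈ Set.Ioi 0) (Set.mem_Ioi.mpr (by linarith) : z ∈ Set.Ioi (0:ℝ))
      (by norm_num : (4:ℝ) < 5) hz
    rw [Gamma_four', Gamma_five'] at hs
    have h18 : ((24:ℝ) - 6) / (5 - 4) = 18 := by norm_num
    linarith [hs]
  rcases eq_or_lt_of_le hx with h | h
  · subst h
    have h5 := h45 y hxy
    have hy5 : 0 < y - 5 := by linarith
    rw [Gamma_five']
    nlinarith [mul_le_mul_of_nonneg_right h5 hy5.le,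
      div_mul_cancel₀ (Real.Gamma y - 24) hy5.ne']
  · have hs2 := Real.convexOn_Gamma.slope_mono_adjacent
      (Set.mem_Ioi.mpr (by norm_num) : (5:ℝ) ∈ Set.Ioi 0)
      (Set.mem_Ioi.mpr (by linarith) : y ∈ Set.Ioi (0:ℝ)) h hxy
    rw [Gamma_five'] at hs2
    have h5x := h45 x h
    have hxy' : 0 < y - x := by linarith
    have h18 : (18:ℝ) ≤ (Real.Gamma y - Real.Gamma x) / (y - x) := le_trans h5x hs2
    nlinarith [mul_le_mul_of_nonneg_right h18 hxy'.le,
      div_mul_cancel₀ (Real.Gamma y - Real.Gamma x) hxy'.ne']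

/-- Γ x ≥ 24 for x ≥ 5. -/
lemma Gamma_ge_24 {x : ℝ} (hx : 5 ≤ x) : 24 ≤ Real.Gamma x := by
  rcases eq_or_lt_of_le hx with h | h
  · rw [← h, Gamma_five']
  · have := Gamma_slope (le_refl 5) h
    rw [Gamma_five'] at this
    nlinarith

/-- bounds for Γ on (0,1]. -/
lemma Gamma_small {d : ℝ} (h0 : 0 < d) (h1 : d ≤ 1) :
    1 / (2 * d) ≤ Real.Gamma d ∧ Real.Gamma d ≤ 1 / d := by
  have e1 : Real.Gamma (d + 1) = d * Real.Gamma d := Real.Gamma_add_one h0.ne'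
  have e2 : Real.Gamma (d + 1 + 1) = (d + 1) * Real.Gamma (d + 1) :=
    Real.Gamma_add_one (by positivity)
  have hge : 1 ≤ Real.Gamma (d + 1 + 1) := Gamma_ge_one (by linarith)
  have hle : Real.Gamma (d + 1 + 1) ≤ d + 1 := by
    have := Gamma_le_on_23 (by linarith : (2:ℝ) ≤ d + 1 + 1) (by linarith)
    linarith
  rw [e2, e1] at hge hle
  have hΓ : 0 < Real.Gamma d := Real.Gamma_pos_of_pos h0
  constructor
  · rw [div_le_iff₀ (by positivity)]
    nlinarith
  · rw [le_div_iff₀ h0]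
    nlinarith

open Set in
lemma exists_sub_mono {f : ℝ → ℝ} {a b y₁ y₂ : ℝ} (hab : a ≤ b)
    (hf : ContinuousOn f (Icc a b)) (hfa : f a = y₁) (hfb : f b = y₂) (hy : y₁ ≤ y₂) :
    ∃ a' b', a ≤ a' ∧ a' ≤ b' ∧ b' ≤ b ∧ f a' = y₁ ∧ f b' = y₂ ∧
      ∀ x ∈ Icc a' b', f x ∈ Icc y₁ y₂ := by
  set S : Set ℝ := Icc a b ∩ f ⁻¹' {y₂} with hS
  have hSclosed : IsClosed S := hf.preimage_isClosed_of_isClosed isClosed_Icc isClosed_singleton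
  have hSne : S.Nonempty := ⟨b, ⟨hab, le_refl b⟩, hfb⟩
  have hSbdd : BddBelow S := ⟨a, fun x hx => hx.1.1⟩
  set b' := sInf S with hb'
  have hb'S : b' ∈ S := hSclosed.csInf_mem hSne hSbdd
  have hb'mem : b' ∈ Icc a b := hb'S.1
  have hfb' : f b' = y₂ := hb'S.2
  have hupper : ∀ x ∈ Icc a b', f x ≤ y₂ := by
    intro x hx
    by_contra hgt
    push_neg at hgt
    have hxb' : x < b' := lt_of_le_of_ne hx.2 (by rintro rfl; rw [hfb'] at hgt; exact absurd rfl hgt.ne')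
    have hax : a ≤ x := hx.1
    have hsub : Icc a x ⊆ Icc a b := Icc_subset_Icc le_rfl (hx.2.trans hb'mem.2)
    have := intermediate_value_Icc hax (hf.mono hsub)
    have hy₂mem : y₂ ∈ Icc (f a) (f x) := ⟨hfa ▸ hy, hgt.le⟩
    obtain ⟨z, hz, hfz⟩ := this hy₂mem
    have hzS : z ∈ S := ⟨⟨hz.1, hz.2.trans (hx.2.trans hb'mem.2)⟩, hfz⟩
    have : b' ≤ z := csInf_le hSbdd hzS
    linarith [hz.2]
  set T : Set ℝ := Icc a b' ∩ f ⁻¹' {y₁} with hT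
  have hTsub : Icc a b' ⊆ Icc a b := Icc_subset_Icc le_rfl hb'mem.2
  have hTclosed : IsClosed T :=
    (hf.mono hTsub).preimage_isClosed_of_isClosed isClosed_Icc isClosed_singleton
  have hTne : T.Nonempty := ⟨a, ⟨le_refl a, hb'mem.1⟩, hfa⟩
  have hTbdd : BddAbove T := ⟨b', fun x hx => hx.1.2⟩
  set a' := sSup T with ha'
  have ha'T : a' ∈ T := hTclosed.csSup_mem hTne hTbdd
  have ha'mem : a' ∈ Icc a b' := ha'T.1
  have hfa' : f a' = y₁ := ha'T.2
  have hlower : ∀ x ∈ Icc a' b', y₁ ≤ f x := by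
    intro x hx
    by_contra hlt
    push_neg at hlt
    have hxa' : a' < x := lt_of_le_of_ne hx.1 (by rintro rfl; rw [hfa'] at hlt; exact absurd rfl hlt.ne)
    have hsub : Icc x b' ⊆ Icc a b := fun z hz =>
      ⟨le_trans (le_trans ha'mem.1 hx.1) hz.1, hz.2.trans hb'mem.2⟩
    have := intermediate_value_Icc hx.2 (hf.mono hsub)
    have hy₁mem : y₁ ∈ Icc (f x) (f b') := ⟨hlt.le, hfb' ▸ hy⟩
    obtain ⟨z, hz, hfz⟩ := this hy₁mem
    have hzT : z ∈ T := ⟨⟨le_trans (le_trans ha'mem.1 hx.1) hz.1, hz.2⟩, hfz⟩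
    have : z ≤ a' := le_csSup hTbdd hzT
    linarith [hz.1]
  refine ⟨a', b', ha'mem.1, ha'mem.2, hb'mem.2, hfa', hfb', fun x hx => ?_⟩
  exact ⟨hlower x hx, hupper x ⟨le_trans ha'mem.1 hx.1, hx.2⟩⟩

open Set in
lemma exists_sub_anti {f : ℝ → ℝ} {a b y₁ y₂ : ℝ} (hab : a ≤ b)
    (hf : ContinuousOn f (Icc a b)) (hfa : f a = y₂) (hfb : f b = y₁) (hy : y₁ ≤ y₂) :
    ∃ a' b', a ≤ a' ∧ a' ≤ b' ∧ b' ≤ b ∧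
      (∃ x ∈ Icc a' b', f x = y₁) ∧ (∃ x ∈ Icc a' b', f x = y₂) ∧
      ∀ x ∈ Icc a' b', f x ∈ Icc y₁ y₂ := by
  set g : ℝ → ℝ := fun x => f (a + b - x) with hg
  have hmaps : ∀ x ∈ Icc a b, a + b - x ∈ Icc a b := fun x hx => ⟨by linarith [hx.2], by linarith [hx.1]⟩
  have hgcont : ContinuousOn g (Icc a b) := by
    apply hf.comp (Continuous.continuousOn (by continuity)) hmaps
  have hga : g a = y₁ := by simp [hg, hfb]
  have hgb : g b = y₂ := by simp [hg, hfa]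
  obtain ⟨a'', b'', h1, h2, h3, h4, h5, h6⟩ := exists_sub_mono hab hgcont hga hgb hy
  refine ⟨a + b - b'', a + b - a'', by linarith, by linarith, by linarith,
    ⟨a + b - a'', ⟨by linarith, le_refl _⟩, h4⟩,
    ⟨a + b - b'', ⟨le_refl _, by linarith⟩, h5⟩, fun x hx => ?_⟩
  have : a + b - x ∈ Icc a'' b'' := ⟨by linarith [hx.2], by linarith [hx.1]⟩
  have h7 := h6 _ this
  have hx' : a + b - (a + b - x) = x := by ring
  rw [hg] at h7
  simpa [hx'] using h7

open Set in
/-- Combined: from two points of `Icc p q` where a continuous `f` attains `y₁ ≤ y₂`,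
extract a subinterval on which `f` stays in `[y₁, y₂]` and still attains both. -/
lemma exists_sub {f : ℝ → ℝ} {p q u v y₁ y₂ : ℝ}
    (hf : ContinuousOn f (Icc p q)) (hu : u ∈ Icc p q) (hv : v ∈ Icc p q)
    (hfu : f u = y₁) (hfv : f v = y₂) (hy : y₁ ≤ y₂) :
    ∃ a' b', a' ≤ b' ∧ Icc a' b' ⊆ Icc p q ∧
      (∃ x ∈ Icc a' b', f x = y₁) ∧ (∃ x ∈ Icc a' b', f x = y₂) ∧
      ∀ x ∈ Icc a' b', f x ∈ Icc y₁ y₂ := by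
  rcases le_total u v with huv | hvu
  · have hsub : Icc u v ⊆ Icc p q := Icc_subset_Icc hu.1 hv.2
    obtain ⟨a', b', h1, h2, h3, h4, h5, h6⟩ := exists_sub_mono huv (hf.mono hsub) hfu hfv hy
    exact ⟨a', b', h2, fun x hx => hsub ⟨le_trans h1 hx.1, hx.2.trans h3⟩,
      ⟨a', ⟨le_refl _, h2⟩, h4⟩, ⟨b', ⟨h2, le_refl _⟩, h5⟩, h6⟩
  · have hsub : Icc v u ⊆ Icc p q := Icc_subset_Icc hv.1 hu.2
    obtain ⟨a', b', h1, h2, h3, h4, h5, h6⟩ := exists_sub_anti hvu (hf.mono hsub) hfv hfu hy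
    exact ⟨a', b', h2, fun x hx => hsub ⟨le_trans h1 hx.1, hx.2.trans h3⟩, h4, h5, h6⟩

noncomputable def seqv (a : ℝ) (n : ℕ) : ℝ := L1Seq Amap Bmap a n

lemma seqv_succ (a : ℝ) (n : ℕ) :
    seqv a (n+1) = if thueMorse n then Bmap (seqv a n) else Amap (seqv a n) := rfl

lemma Amap_eq {x : ℝ} (hx : ¬∃ m : ℤ, x = (m : ℝ)) : Amap x = Real.Gamma x := if_neg hx

lemma not_int_of_Ioo {x : ℝ} {m : ℤ} (h1 : (m:ℝ) < x) (h2 : x < m + 1) :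
    ¬∃ j : ℤ, x = (j:ℝ) := by
  rintro ⟨j, rfl⟩
  have hj1 : m < j := by exact_mod_cast h1
  have hj2 : (j:ℝ) < ((m + 1 : ℤ) : ℝ) := by push_cast; exact h2
  have : j < m + 1 := by exact_mod_cast hj2
  omega

lemma contOn_Amap {s : Set ℝ} (hpos : ∀ x ∈ s, (0:ℝ) < x)
    (hint : ∀ x ∈ s, ¬∃ m : ℤ, x = (m:ℝ)) : ContinuousOn Amap s := by
  have hg : ContinuousOn Real.Gamma s := by
    intro x hx
    refine (Real.differentiableAt_Gamma fun m => ?_).continuousAt.continuousWithinAt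
    have := hpos x hx
    intro h
    rw [h] at this
    have : (0:ℝ) < -(m:ℝ) := this
    have hm : (0:ℝ) ≤ (m:ℝ) := by exact_mod_cast Nat.cast_nonneg m
    linarith
  exact hg.congr (fun x hx => Amap_eq (hint x hx))

/-- invariant: on `Icc p q`, the map `a ↦ v_a n` is continuous and attains `y₁` and `y₂`. -/
def Good (n : ℕ) (p q y₁ y₂ : ℝ) : Prop :=
  p ≤ q ∧ y₁ ≤ y₂ ∧ ContinuousOn (fun a => seqv a n) (Set.Icc p q) ∧
  (∃ a ∈ Set.Icc p q, seqv a n = y₁) ∧ (∃ a ∈ Set.Icc p q, seqv a n = y₂)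

lemma Good.attains {n : ℕ} {p q y₁ y₂ c : ℝ} (h : Good n p q y₁ y₂)
    (hc : c ∈ Set.Icc y₁ y₂) : ∃ a ∈ Set.Icc p q, seqv a n = c := by
  obtain ⟨hpq, hy, hcont, ⟨u, hu, hfu⟩, ⟨v, hv, hfv⟩⟩ := h
  have hsub : Set.uIcc u v ⊆ Set.Icc p q := Set.ordConnected_Icc.uIcc_subset hu hv
  have hiv := intermediate_value_uIcc (hcont.mono hsub)
  have hcmem : c ∈ Set.uIcc (seqv u n) (seqv v n) := by
    rw [hfu, hfv, Set.uIcc_of_le hy]; exact hc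
  obtain ⟨x, hx, hfx⟩ := hiv hcmem
  exact ⟨x, hsub hx, hfx⟩

lemma cont_stepA {n : ℕ} {s : Set ℝ} {c₁ c₂ : ℝ} (htm : thueMorse n = false)
    (hcont : ContinuousOn (fun a => seqv a n) s)
    (hmaps : ∀ a ∈ s, seqv a n ∈ Set.Icc c₁ c₂)
    (hpos : ∀ x ∈ Set.Icc c₁ c₂, (0:ℝ) < x)
    (hnint : ∀ x ∈ Set.Icc c₁ c₂, ¬∃ m : ℤ, x = (m:ℝ)) :
    ContinuousOn (fun a => seqv a (n+1)) s := by
  have h1 : ContinuousOn Amap (Set.Icc c₁ c₂) := contOn_Amap hpos hnint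
  have h2 : ContinuousOn (Amap ∘ fun a => seqv a n) s := h1.comp hcont hmaps
  exact h2.congr (fun a ha => by simp [seqv_succ, htm, Function.comp])

lemma stepB {n : ℕ} {p q y₁ y₂ : ℝ} (htm : thueMorse n = true)
    (hg : Good n p q y₁ y₂)
    (hst : (y₁ = 0 ∧ y₂ = 1) ∨ (6 ≤ y₁ ∧ y₁ + 2 ≤ y₂)) :
    Good (n+1) p q 0 1 := by
  have hz0 : ∃ z ∈ Set.Icc y₁ y₂, Real.sin (Real.pi * z) = 0 := by
    rcases hst with ⟨h1, h2⟩ | ⟨h1, h2⟩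
    · exact ⟨0, by rw [h1, h2]; norm_num, by simp⟩
    · refine ⟨((⌈y₁⌉ : ℤ) : ℝ), ⟨Int.le_ceil y₁, ?_⟩, ?_⟩
      · have := Int.ceil_lt_add_one y₁; linarith
      · rw [mul_comm]; exact Real.sin_int_mul_pi _
  have hz1 : ∃ z ∈ Set.Icc y₁ y₂, Real.sin (Real.pi * z) = 1 := by
    rcases hst with ⟨h1, h2⟩ | ⟨h1, h2⟩
    · refine ⟨1/2, by rw [h1, h2]; norm_num, ?_⟩
      rw [show Real.pi * (1/2) = Real.pi / 2 by ring]; exact Real.sin_pi_div_two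
    · set j : ℤ := ⌈(y₁ - 1/2)/2⌉ with hj
      have hj1 : (y₁ - 1/2)/2 ≤ (j:ℝ) := Int.le_ceil _
      have hj2 : (j:ℝ) < (y₁ - 1/2)/2 + 1 := Int.ceil_lt_add_one _
      refine ⟨2*(j:ℝ) + 1/2, ⟨by linarith, by linarith⟩, ?_⟩
      rw [show Real.pi * (2*(j:ℝ) + 1/2) = Real.pi/2 + (j:ℝ) * (2 * Real.pi) by ring,
        Real.sin_add_int_mul_two_pi, Real.sin_pi_div_two]
  obtain ⟨z₀, hz₀m, hsz₀⟩ := hz0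
  obtain ⟨z₁, hz₁m, hsz₁⟩ := hz1
  obtain ⟨a₀, ha₀, hfa₀⟩ := hg.attains hz₀m
  obtain ⟨a₁, ha₁, hfa₁⟩ := hg.attains hz₁m
  have hcont1 : ContinuousOn (fun a => seqv a (n+1)) (Set.Icc p q) := by
    have hB : ContinuousOn (fun a => Bmap (seqv a n)) (Set.Icc p q) := by
      exact (Real.continuous_sin.comp (continuous_const.mul continuous_id)).comp_continuousOn
        hg.2.2.1
    exact hB.congr (fun a ha => by simp [seqv_succ, htm])
  refine ⟨hg.1, by norm_num, hcont1, ⟨a₀, ha₀, ?_⟩, ⟨a₁, ha₁, ?_⟩⟩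
  · rw [seqv_succ, htm, if_pos rfl]; show Real.sin (Real.pi * seqv a₀ n) = 0
    rw [hfa₀]; exact hsz₀
  · rw [seqv_succ, htm, if_pos rfl]; show Real.sin (Real.pi * seqv a₁ n) = 1
    rw [hfa₁]; exact hsz₁

lemma stepA01 {n : ℕ} {p q : ℝ} (htm : thueMorse n = false)
    (hg : Good n p q 0 1) {M : ℝ} (hM : 0 < M) :
    ∃ p' q' y₁ y₂, Set.Icc p' q' ⊆ Set.Icc p q ∧ Good (n+1) p' q' y₁ y₂ ∧
      6 ≤ y₁ ∧ y₁ + 2 ≤ y₂ ∧ ∀ a ∈ Set.Icc p' q', M < |seqv a (n+1)| := by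
  set d : ℝ := 1 / (2*M + 12) with hd
  have hd0 : 0 < d := by positivity
  have hd1 : d ≤ 1/12 := by
    rw [hd, div_le_div_iff₀ (by linarith) (by norm_num)]; linarith
  have h2d : 1/(2*d) = M + 6 := by rw [hd]; field_simp; ring
  have h1d : 1/d = 2*M + 12 := by rw [hd]; field_simp
  have h4d : 1/(2*(d/4)) = 2*(2*M+12) := by rw [hd]; field_simp; ring
  obtain ⟨u, hu, hfu⟩ := hg.attains (⟨by positivity, by linarith⟩ : d/4 ∈ Set.Icc (0:ℝ) 1)
  obtain ⟨v, hv, hfv⟩ := hg.attains (⟨hd0.le, by linarith⟩ : d ∈ Set.Icc (0:ℝ) 1)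
  obtain ⟨p', q', hpq', hsub, hex1, hex2, hval⟩ :=
    exists_sub hg.2.2.1 hu hv hfu hfv (by linarith : d/4 ≤ d)
  have hpos : ∀ x ∈ Set.Icc (d/4) d, (0:ℝ) < x := fun x hx => lt_of_lt_of_le (by positivity) hx.1
  have hnint : ∀ x ∈ Set.Icc (d/4) d, ¬∃ m : ℤ, x = (m:ℝ) := by
    intro x hx
    refine not_int_of_Ioo (m := 0) ?_ ?_
    · exact_mod_cast lt_of_lt_of_le (by positivity) hx.1
    · push_cast; linarith [hx.2]
  have hcont1 : ContinuousOn (fun a => seqv a (n+1)) (Set.Icc p' q') :=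
    cont_stepA htm (hg.2.2.1.mono hsub) hval hpos hnint
  have hGval : ∀ a ∈ Set.Icc p' q', seqv a (n+1) = Real.Gamma (seqv a n) := by
    intro a ha
    rw [seqv_succ, htm, if_neg (by simp)]
    exact Amap_eq (hnint _ (hval a ha))
  have hbound : ∀ a ∈ Set.Icc p' q', M + 6 ≤ seqv a (n+1) := by
    intro a ha
    rw [hGval a ha]
    have hxm := hval a ha
    have ht0 : 0 < seqv a n := hpos _ hxm
    have ht1 : seqv a n ≤ 1 := le_trans hxm.2 (by linarith)
    have hlow := (Gamma_small ht0 ht1).1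
    have : 1/(2*d) ≤ 1/(2*seqv a n) := by
      apply one_div_le_one_div_of_le (by linarith) (by linarith [hxm.2])
    linarith [h2d ▸ this]
  refine ⟨p', q', Real.Gamma d, Real.Gamma (d/4), hsub, ?_, ?_, ?_, ?_⟩
  · -- Good
    have hGd := Gamma_small hd0 (by linarith)
    have hGd4 := Gamma_small (by positivity : (0:ℝ) < d/4) (by linarith)
    refine ⟨hpq', by linarith [hGd.2, hGd4.1, h1d ▸ hGd.2, h4d ▸ hGd4.1], hcont1, ?_, ?_⟩
    · obtain ⟨x, hx, hfx⟩ := hex2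
      exact ⟨x, hx, by rw [hGval x hx, hfx]⟩
    · obtain ⟨x, hx, hfx⟩ := hex1
      exact ⟨x, hx, by rw [hGval x hx, hfx]⟩
  · -- 6 ≤ Γ d
    have hGd := Gamma_small hd0 (by linarith)
    linarith [h2d ▸ hGd.1]
  · -- Γ d + 2 ≤ Γ (d/4)
    have hGd := Gamma_small hd0 (by linarith)
    have hGd4 := Gamma_small (by positivity : (0:ℝ) < d/4) (by linarith)
    linarith [h1d ▸ hGd.2, h4d ▸ hGd4.1]
  · intro a ha
    have := hbound a ha
    calc M < M + 6 := by linarith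
    _ ≤ seqv a (n+1) := this
    _ ≤ |seqv a (n+1)| := le_abs_self _

lemma stepAbig {n : ℕ} {p q y₁ y₂ : ℝ} (htm : thueMorse n = false)
    (hg : Good n p q y₁ y₂) (h6 : 6 ≤ y₁) (h2 : y₁ + 2 ≤ y₂) :
    ∃ p' q' z₁ z₂, Set.Icc p' q' ⊆ Set.Icc p q ∧ Good (n+1) p' q' z₁ z₂ ∧
      6 ≤ z₁ ∧ z₁ + 2 ≤ z₂ := by
  have hm1 : y₁ ≤ ((⌈y₁⌉ : ℤ) : ℝ) := Int.le_ceil y₁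
  have hm2 : ((⌈y₁⌉ : ℤ) : ℝ) < y₁ + 1 := Int.ceil_lt_add_one y₁
  set m : ℝ := ((⌈y₁⌉ : ℤ) : ℝ) with hmdef
  obtain ⟨u, hu, hfu⟩ := hg.attains (⟨by linarith, by linarith⟩ : m + 1/4 ∈ Set.Icc y₁ y₂)
  obtain ⟨v, hv, hfv⟩ := hg.attains (⟨by linarith, by linarith⟩ : m + 3/4 ∈ Set.Icc y₁ y₂)
  obtain ⟨p', q', hpq', hsub, hex1, hex2, hval⟩ :=
    exists_sub hg.2.2.1 hu hv hfu hfv (by linarith : m + 1/4 ≤ m + 3/4)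
  have hpos : ∀ x ∈ Set.Icc (m + 1/4) (m + 3/4), (0:ℝ) < x := fun x hx => by
    have := hx.1; linarith
  have hnint : ∀ x ∈ Set.Icc (m + 1/4) (m + 3/4), ¬∃ j : ℤ, x = (j:ℝ) := by
    intro x hx
    refine not_int_of_Ioo (m := ⌈y₁⌉) ?_ ?_
    · calc ((⌈y₁⌉:ℤ):ℝ) < m + 1/4 := by rw [← hmdef]; linarith
      _ ≤ x := hx.1
    · calc x ≤ m + 3/4 := hx.2
      _ < ((⌈y₁⌉:ℤ):ℝ) + 1 := by rw [← hmdef]; linarith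
  have hcont1 : ContinuousOn (fun a => seqv a (n+1)) (Set.Icc p' q') :=
    cont_stepA htm (hg.2.2.1.mono hsub) hval hpos hnint
  have hGval : ∀ a ∈ Set.Icc p' q', seqv a (n+1) = Real.Gamma (seqv a n) := by
    intro a ha
    rw [seqv_succ, htm, if_neg (by simp)]
    exact Amap_eq (hnint _ (hval a ha))
  have hslope : 18 * ((m + 3/4) - (m + 1/4)) ≤
      Real.Gamma (m + 3/4) - Real.Gamma (m + 1/4) :=
    Gamma_slope (by linarith) (by linarith)
  have h24 : 24 ≤ Real.Gamma (m + 1/4) := Gamma_ge_24 (by linarith)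
  refine ⟨p', q', Real.Gamma (m + 1/4), Real.Gamma (m + 3/4), hsub,
    ⟨hpq', by linarith, hcont1, ?_, ?_⟩, by linarith, by linarith⟩
  · obtain ⟨x, hx, hfx⟩ := hex1
    exact ⟨x, hx, by rw [hGval x hx, hfx]⟩
  · obtain ⟨x, hx, hfx⟩ := hex2
    exact ⟨x, hx, by rw [hGval x hx, hfx]⟩

/-- the full invariant. -/
def St (n : ℕ) (p q : ℝ) : Prop :=
  ∃ y₁ y₂, Good n p q y₁ y₂ ∧ ((y₁ = 0 ∧ y₂ = 1) ∨ (6 ≤ y₁ ∧ y₁ + 2 ≤ y₂))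

lemma St.le {n : ℕ} {p q : ℝ} (h : St n p q) : p ≤ q := by
  obtain ⟨y₁, y₂, hg, -⟩ := h; exact hg.1

lemma step {n : ℕ} {p q : ℝ} (h : St n p q) :
    ∃ p' q', Set.Icc p' q' ⊆ Set.Icc p q ∧ St (n+1) p' q' := by
  obtain ⟨y₁, y₂, hg, hst⟩ := h
  cases htm : thueMorse n with
  | true =>
    exact ⟨p, q, subset_rfl, 0, 1, stepB htm hg hst, Or.inl ⟨rfl, rfl⟩⟩
  | false =>
    rcases hst with ⟨h1, h2⟩ | ⟨h1, h2⟩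
    · subst h1; subst h2
      obtain ⟨p', q', z₁, z₂, hsub, hg', h6, hz2, -⟩ := stepA01 htm hg one_pos
      exact ⟨p', q', hsub, z₁, z₂, hg', Or.inr ⟨h6, hz2⟩⟩
    · obtain ⟨p', q', z₁, z₂, hsub, hg', h6, hz2⟩ := stepAbig htm hg h1 h2
      exact ⟨p', q', hsub, z₁, z₂, hg', Or.inr ⟨h6, hz2⟩⟩

lemma steps {n : ℕ} {p q : ℝ} (h : St n p q) (j : ℕ) :
    ∃ p' q', Set.Icc p' q' ⊆ Set.Icc p q ∧ St (n+j) p' q' := by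
  induction j with
  | zero => exact ⟨p, q, subset_rfl, h⟩
  | succ j ih =>
    obtain ⟨p', q', hsub, hst⟩ := ih
    obtain ⟨p'', q'', hsub', hst'⟩ := step hst
    exact ⟨p'', q'', hsub'.trans hsub, hst'⟩

lemma progress {n : ℕ} {p q : ℝ} (h : St n p q) {M : ℝ} (hM : 0 < M) :
    ∃ m p' q', Set.Icc p' q' ⊆ Set.Icc p q ∧ St m p' q' ∧
      ∀ a ∈ Set.Icc p' q', M < |seqv a m| := by
  have hn : n ≤ 2 ^ (n + 1) := le_of_lt (Nat.lt_two_pow_self (n := n) |>.trans_le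
    (Nat.pow_le_pow_right (by norm_num) (Nat.le_succ n)))
  obtain ⟨p', q', hsub, hst⟩ := steps h (2 ^ (n+1) - n)
  rw [show n + (2 ^ (n+1) - n) = 2 ^ (n+1) by omega] at hst
  obtain ⟨y₁, y₂, hg, hstate⟩ := hst
  have hgB : Good (2 ^ (n+1) + 1) p' q' 0 1 := stepB (tm_pow (n+1)) hg hstate
  obtain ⟨p'', q'', z₁, z₂, hsub', hg', h6, hz2, hbig⟩ :=
    stepA01 (tm_pow_add_one (n+1) (by omega)) hgB hM
  refine ⟨2 ^ (n+1) + 1 + 1, p'', q'', hsub'.trans hsub, ⟨z₁, z₂, hg', Or.inr ⟨h6, hz2⟩⟩, hbig⟩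

lemma progress' (s : ℕ × ℝ × ℝ) (h : St s.1 s.2.1 s.2.2) {M : ℝ} (hM : 0 < M) :
    ∃ t : ℕ × ℝ × ℝ, Set.Icc t.2.1 t.2.2 ⊆ Set.Icc s.2.1 s.2.2 ∧ St t.1 t.2.1 t.2.2 ∧
      ∀ a ∈ Set.Icc t.2.1 t.2.2, M < |seqv a t.1| := by
  obtain ⟨m, p', q', h1, h2, h3⟩ := progress h hM
  exact ⟨(m, p', q'), h1, h2, h3⟩

lemma st_init : St 0 0 1 := by
  refine ⟨0, 1, ⟨by norm_num, by norm_num, ?_, ⟨0, by norm_num, rfl⟩, ⟨1, by norm_num, rfl⟩⟩,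
    Or.inl ⟨rfl, rfl⟩⟩
  exact continuousOn_id

noncomputable def chain : ℕ → {s : ℕ × ℝ × ℝ // St s.1 s.2.1 s.2.2}
  | 0 => ⟨(0, 0, 1), st_init⟩
  | k+1 =>
    ⟨(progress' (chain k).1 (chain k).2 (by positivity : (0:ℝ) < (k:ℝ)+1)).choose,
     (progress' (chain k).1 (chain k).2 (by positivity : (0:ℝ) < (k:ℝ)+1)).choose_spec.2.1⟩

lemma chain_spec (k : ℕ) :
    Set.Icc (chain (k+1)).1.2.1 (chain (k+1)).1.2.2 ⊆
      Set.Icc (chain k).1.2.1 (chain k).1.2.2 ∧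
    ∀ a ∈ Set.Icc (chain (k+1)).1.2.1 (chain (k+1)).1.2.2,
      ((k:ℝ)+1) < |seqv a (chain (k+1)).1.1| := by
  have h := (progress' (chain k).1 (chain k).2
    (show (0:ℝ) < (k:ℝ)+1 by positivity)).choose_spec
  exact ⟨h.1, h.2.2⟩

/-- The family of L₁-iterated sequences of `(Amap, Bmap)` contains unbounded
sequences. -/
theorem L1Seq_gamma_sin_exists_unbounded :
    ∃ a : ℝ, ∀ M : ℝ, 0 < M → ∃ n : ℕ, M < |L1Seq Amap Bmap a n| := by
  set p : ℕ → ℝ := fun k => (chain k).1.2.1 with hp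
  set q : ℕ → ℝ := fun k => (chain k).1.2.2 with hq
  have hpq : ∀ k, p k ≤ q k := fun k => (chain k).2.le
  have hsub : ∀ k, Set.Icc (p (k+1)) (q (k+1)) ⊆ Set.Icc (p k) (q k) := fun k => (chain_spec k).1
  have hmono : ∀ k, p k ≤ p (k+1) ∧ q (k+1) ≤ q k := by
    intro k
    have h := hsub k
    rw [Set.Icc_subset_Icc_iff (hpq (k+1))] at h
    exact h
  have hpmono : Monotone p := monotone_nat_of_le_succ (fun k => (hmono k).1)
  have hqmono : Antitone q := antitone_nat_of_succ_le (fun k => (hmono k).2)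
  have hcross : ∀ j k, p j ≤ q k := by
    intro j k
    rcases le_total j k with h | h
    · exact le_trans (hpmono h) (hpq k)
    · exact le_trans (hpq j) (hqmono h)
  have hbdd : BddAbove (Set.range p) := ⟨q 0, by rintro _ ⟨k, rfl⟩; exact hcross k 0⟩
  set a : ℝ := ⨆ k, p k with ha
  have ha1 : ∀ k, p k ≤ a := fun k => le_ciSup hbdd k
  have ha2 : ∀ k, a ≤ q k := fun k => ciSup_le (fun j => hcross j k)
  refine ⟨a, fun M hM => ?_⟩
  obtain ⟨k, hk⟩ := exists_nat_ge M
  have hb := (chain_spec k).2 a ⟨ha1 (k+1), ha2 (k+1)⟩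
  exact ⟨(chain (k+1)).1.1, lt_of_le_of_lt (hk.trans (by linarith)) hb⟩
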